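/- Let p and q be odd integers with p, q ≥ 3 and let m ≥ 2 be an integer such that 1/p + 1/q + 1/m < 1. Set b = gcd(pq, pm, qm). Then (p − ⌊p/2⌋ − 1)(q − ⌊q/2⌋ − 1)(m − ⌊m/2⌋ − 1) + ⌊p/2⌋·⌊q/2⌋·⌊m/2⌋ + ⌊gcd(p,q)/2⌋ + ⌊gcd(p,m)/2⌋ + ⌊gcd(q,m)/2⌋ + 1 − (⌊b/2⌋ + 1) ≥ 3. -/

import Mathlib

set_option maxHeartbeats 1600000 in
theorem at_least_three_irreducible_characters (p q m : ℤ)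
    (hpodd : Odd p) (hqodd : Odd q) (hp : 3 ≤ p) (hq : 3 ≤ q) (hm : 2 ≤ m)
    (hhyp : (1 : ℚ) / p + 1 / q + 1 / m < 1)
    (b : ℤ) (hb : b = Int.gcd (p * q) (Int.gcd (p * m) (q * m))) :
    (p - p / 2 - 1) * (q - q / 2 - 1) * (m - m / 2 - 1) +
        (p / 2) * (q / 2) * (m / 2) +
        (Int.gcd p q : ℤ) / 2 + (Int.gcd p m : ℤ) / 2 + (Int.gcd q m : ℤ) / 2 + 1 -
        (b / 2 + 1) ≥ 3 := by
  -- hyperbolicity over ℤ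
  have hZ : q * m + p * m + p * q < p * q * m := by
    have hp0 : (0:ℚ) < (p:ℚ) := by exact_mod_cast (by omega : (0:ℤ) < p)
    have hq0 : (0:ℚ) < (q:ℚ) := by exact_mod_cast (by omega : (0:ℤ) < q)
    have hm0 : (0:ℚ) < (m:ℚ) := by exact_mod_cast (by omega : (0:ℤ) < m)
    have : ((q : ℚ) * m + p * m + p * q) < p * q * m := by
      rw [div_add_div _ _ hp0.ne' hq0.ne', div_add_div _ _ (by positivity) hm0.ne',
        div_lt_one (by positivity)] at hhyp
      nlinarith [hhyp]
    exact_mod_cast this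
  obtain ⟨P, hP⟩ := hpodd
  obtain ⟨Q, hQ⟩ := hqodd
  set g1 : ℤ := (Int.gcd p q : ℤ) with hg1
  set g2 : ℤ := (Int.gcd p m : ℤ) with hg2
  set g3 : ℤ := (Int.gcd q m : ℤ) with hg3
  have hg1p : g1 ∣ p := Int.gcd_dvd_left _ _
  have hg1q : g1 ∣ q := Int.gcd_dvd_right _ _
  have hg2p : g2 ∣ p := Int.gcd_dvd_left _ _
  have hg3q : g3 ∣ q := Int.gcd_dvd_left _ _
  have hg10 : 0 < g1 := by
    rw [hg1]
    exact_mod_cast Int.gcd_pos_iff.mpr (Or.inl (by omega : p ≠ 0))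
  have hg20 : 0 < g2 := by
    rw [hg2]
    exact_mod_cast Int.gcd_pos_iff.mpr (Or.inl (by omega : p ≠ 0))
  have hg30 : 0 < g3 := by
    rw [hg3]
    exact_mod_cast Int.gcd_pos_iff.mpr (Or.inl (by omega : q ≠ 0))
  have hg1P : g1 ≤ p := Int.le_of_dvd (by omega) hg1p
  have hg1Q : g1 ≤ q := Int.le_of_dvd (by omega) hg1q
  have hg1odd : g1 % 2 = 1 := by
    rcases Int.even_or_odd g1 with h | h
    · exfalso
      obtain ⟨c, hc⟩ := hg1p
      have he : Even p := by rw [hc]; exact h.mul_right c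
      obtain ⟨k, hk⟩ := he
      omega
    · obtain ⟨k, hk⟩ := h
      omega
  -- b facts
  have hbdvdpq : b ∣ p * q := by rw [hb]; exact Int.gcd_dvd_left _ _
  have hb0 : 0 < b := by
    rw [hb]
    exact_mod_cast Int.gcd_pos_iff.mpr (Or.inl (by positivity : p * q ≠ 0))
  have hbodd : b % 2 = 1 := by
    rcases Int.even_or_odd b with h | h
    · exfalso
      obtain ⟨c, hc⟩ := hbdvdpq
      have he : Even (p * q) := by rw [hc]; exact h.mul_right c
      have ho : Odd (p * q) := ⟨2*P*Q+P+Q, by rw [hP, hQ]; ring⟩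
      obtain ⟨k, hk⟩ := he
      obtain ⟨l, hl⟩ := ho
      omega
    · obtain ⟨k, hk⟩ := h
      omega
  have hbg1m : b ∣ g1 * m := by
    have h1 : b ∣ ((Int.gcd (p * m) (q * m) : ℕ) : ℤ) := by rw [hb]; exact Int.gcd_dvd_right _ _
    have h2 : ((Int.gcd (p * m) (q * m) : ℕ) : ℤ) = g1 * m := by
      rw [Int.gcd_mul_right]
      push_cast
      rw [abs_of_nonneg (show (0:ℤ) ≤ m by omega)]
    rwa [h2] at h1
  -- reduce goal
  have hPp : p / 2 = P := by omega
  have hQq : q / 2 = Q := by omega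
  rw [hPp, hQq, hP, hQ]
  suffices key : P * Q * (m - 1) + g1 / 2 + g2 / 2 + g3 / 2 - b / 2 ≥ 3 by
    have e : (2*P+1 - P - 1) * (2*Q+1 - Q - 1) * (m - m / 2 - 1) + P * Q * (m / 2)
        = P * Q * (m - 1) := by
      generalize m / 2 = M
      ring
    rw [e]
    linarith [key]
  have hA2 : 0 ≤ g2 / 2 := by omega
  have hA3 : 0 ≤ g3 / 2 := by omega
  have hPpos : 1 ≤ P := by omega
  have hQpos : 1 ≤ Q := by omega
  rcases eq_or_lt_of_le hm with hm2 | hm3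
  · -- m = 2
    have hm2' : m = 2 := hm2.symm
    have hbg1 : b ∣ g1 := by
      obtain ⟨c, hc⟩ := hbg1m
      rw [hm2'] at hc
      rcases Int.even_or_odd c with hce | hco
      · obtain ⟨c', hc'⟩ := hce
        refine ⟨c', ?_⟩
        have h2 : g1 * 2 = b * c' * 2 := by rw [hc, hc']; ring
        linarith
      · exfalso
        have : Odd (b * c) := (Int.odd_mul).mpr ⟨by rwa [Int.odd_iff], hco⟩
        rw [← hc] at this
        obtain ⟨k, hk⟩ := this
        omega
    have hbleg1 : b ≤ g1 := Int.le_of_dvd hg10 hbg1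
    have hPQ : 3 ≤ P * Q := by
      rw [hm2', hP, hQ] at hZ
      nlinarith [mul_nonneg (show (0:ℤ) ≤ P - 1 by omega) (show (0:ℤ) ≤ Q - 1 by omega)]
    have hbB : b / 2 ≤ g1 / 2 := by omega
    rw [hm2']
    have e2 : P * Q * (2 - 1) = P * Q := by ring
    rw [e2]
    linarith [hPQ, hbB, hA2, hA3]
  · -- m ≥ 3
    have hm3' : 3 ≤ m := by omega
    by_cases hpq3 : p = 3 ∧ q = 3
    · obtain ⟨hp3, hq3⟩ := hpq3
      have hP1 : P = 1 := by omega
      have hQ1 : Q = 1 := by omega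
      have hg13 : g1 = 3 := by
        rw [hg1, hp3, hq3]
        norm_num [Int.gcd_self]
      have hm4 : 4 ≤ m := by
        rw [hp3, hq3] at hZ
        omega
      have hb9 : b ∣ 9 := by
        rw [show (9:ℤ) = p * q by rw [hp3, hq3]; norm_num]
        exact hbdvdpq
      have hbcases : b ≤ 4 ∨ b = 9 := by
        obtain ⟨c, hc⟩ := hb9
        have hc0 : 0 < c := by nlinarith
        by_cases hb4 : b ≤ 4
        · exact Or.inl hb4
        · right
          have hc1 : c = 1 := by nlinarith
          rw [hc1, mul_one] at hc
          omega
      have e2 : P * Q * (m - 1) = m - 1 := by rw [hP1, hQ1]; ring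
      rw [e2]
      rcases hbcases with hbv | hbv
      · omega
      · -- b = 9 : then 3 ∣ m, so g2, g3 ≥ 3 and m ≥ 6
        have h3m : (3:ℤ) ∣ m := by
          rw [hbv, hg13] at hbg1m
          omega
        have h3g2 : (3:ℤ) ≤ g2 := by
          have : (3:ℤ) ∣ g2 := by
            rw [hg2]
            exact Int.dvd_coe_gcd (by rw [hp3]) h3m
          exact Int.le_of_dvd hg20 this
        have h3g3 : (3:ℤ) ≤ g3 := by
          have : (3:ℤ) ∣ g3 := by
            rw [hg3]
            exact Int.dvd_coe_gcd (by rw [hq3]) h3m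
          exact Int.le_of_dvd hg30 this
        omega
    · -- not both 3
      have key2 : g1 / 2 + 2 ≤ P * Q := by
        have ha1P : g1 / 2 ≤ P := by omega
        have ha1Q : g1 / 2 ≤ Q := by omega
        by_cases hP2 : 2 ≤ P
        · by_cases hQ2 : 2 ≤ Q
          · linarith [mul_nonneg (show (0:ℤ) ≤ P - 2 by omega) (show (0:ℤ) ≤ Q by omega)]
          · -- Q = 1, q = 3
            have hQ1 : Q = 1 := by omega
            have hq3 : q = 3 := by omega
            have hp5 : 5 ≤ p := by
              rcases (by omega : p = 3 ∨ 5 ≤ p) with h | h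
              · exact absurd ⟨h, hq3⟩ hpq3
              · exact h
            have hg1d3 : g1 ∣ 3 := by rwa [hq3] at hg1q
            have hg1le3 : g1 ≤ 3 := Int.le_of_dvd (by norm_num) hg1d3
            have ePQ : P * Q = P := by rw [hQ1]; ring
            rcases (by omega : g1 = 1 ∨ g1 = 3) with h1 | h3
            · omega
            · have h3p : (3:ℤ) ∣ p := by rwa [h3] at hg1p
              omega
        · -- P = 1, p = 3
          have hP1 : P = 1 := by omega
          have hp3 : p = 3 := by omega
          have hq5 : 5 ≤ q := by
            rcases (by omega : q = 3 ∨ 5 ≤ q) with h | h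
            · exact absurd ⟨hp3, h⟩ hpq3
            · exact h
          have hg1d3 : g1 ∣ 3 := by rwa [hp3] at hg1p
          have hg1le3 : g1 ≤ 3 := Int.le_of_dvd (by norm_num) hg1d3
          have ePQ : P * Q = Q := by rw [hP1]; ring
          rcases (by omega : g1 = 1 ∨ g1 = 3) with h1 | h3
          · omega
          · have h3q : (3:ℤ) ∣ q := by rwa [h3] at hg1q
            omega
      -- main estimate
      have hble : b ≤ g1 * m := Int.le_of_dvd (by positivity) hbg1m
      have hprod : 0 ≤ (P * Q - g1 / 2 - 2) * (m - 1) :=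
        mul_nonneg (by omega) (by omega)
      have hgm : (2 * (g1 / 2) + 1) * m = g1 * m := by
        congr 1
        omega
      have hb2 : 2 * (b / 2) + 1 = b := by omega
      nlinarith [hprod, hble, hgm, hb2, hA2, hA3, hm3']
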